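/- Let A and B be primitive words with |A| ≤ |B| and R(A) ≠ R(B). Write B = A^p S where p = deg_B(A) is the largest integer such that A^p is a prefix of B, and suppose S is a nonempty proper prefix of A with A = ST. Then ST ≠ TS. -/
import Mathlib


/-- `wpow A n` is the `n`-fold concatenation `A^n` of the word `A`. -/
def wpow {α : Type*} (A : List α) : ℕ → List α
  | 0 => []
  | n + 1 => A ++ wpow A n


/-- `R A` is the infinite periodic word `AAA⋯`: `R A i = A (i % |A|)`. -/
def R {α : Type*} [Inhabited α] (A : List α) : ℕ → α :=
  fun i => A.getD (i % A.length) default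

/-- Strict lexicographic order on infinite words. -/
def InfLt {α : Type*} [LinearOrder α] (f g : ℕ → α) : Prop :=
  ∃ i, (∀ j < i, f j = g j) ∧ f i < g i

/-- Lexicographic (non-strict) order on infinite words. -/
def InfLe {α : Type*} [LinearOrder α] (f g : ℕ → α) : Prop :=
  f = g ∨ InfLt f g


/-- A word is primitive if it is nonempty and is not a proper power `B^k`, `k ≥ 2`. -/
def Primitive {α : Type*} (A : List α) : Prop :=
  A ≠ [] ∧ ∀ (B : List α) (k : ℕ), 2 ≤ k → A ≠ wpow B k

lemma wpow_add {α : Type*} (A : List α) (m n : ℕ) :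
    wpow A (m + n) = wpow A m ++ wpow A n := by
  induction m with
  | zero => simp [wpow]
  | succ k ih => rw [Nat.succ_add]; simp [wpow, ih]

lemma comm_pow {α : Type*} : ∀ n (S T : List α), S.length + T.length ≤ n →
    S ≠ [] → T ≠ [] → S ++ T = T ++ S →
    ∃ w m k, 1 ≤ m ∧ 1 ≤ k ∧ S = wpow w m ∧ T = wpow w k := by
  intro n
  induction n with
  | zero => intro S T h hS _ _; exact absurd (List.length_eq_zero_iff.mp (by omega)) hS
  | succ n ih =>
    intro S T hn hS hT hcomm
    rcases le_or_gt S.length T.length with hle | hlt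
    · have hpre : S <+: T := by
        refine List.prefix_of_prefix_length_le (l₃ := T ++ S) ?_ ?_ hle
        · rw [← hcomm]; exact List.prefix_append S T
        · exact List.prefix_append T S
      obtain ⟨T', rfl⟩ := hpre
      rcases eq_or_ne T' [] with rfl | hT'
      · exact ⟨S, 1, 1, le_refl 1, le_refl 1, by simp [wpow], by simp [wpow]⟩
      · have hcomm' : S ++ T' = T' ++ S := by
          have : S ++ (S ++ T') = (S ++ T') ++ S := hcomm
          simpa [List.append_assoc] using this
        have hlen' : S.length + T'.length ≤ n := by
          have h1 : 1 ≤ S.length := List.length_pos_iff.mpr hS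
          simp at hn; omega
        obtain ⟨w, m, k, hm, hk, hSw, hTw⟩ := ih S T' hlen' hS hT' hcomm'
        exact ⟨w, m, m + k, hm, by omega, hSw, by rw [wpow_add, hSw, hTw]⟩
    · have hpre : T <+: S := by
        refine List.prefix_of_prefix_length_le (l₃ := S ++ T) ?_ ?_ hlt.le
        · rw [hcomm]; exact List.prefix_append T S
        · exact List.prefix_append S T
      obtain ⟨S', rfl⟩ := hpre
      have hS' : S' ≠ [] := by
        rintro rfl; simp at hlt
      have hcomm' : S' ++ T = T ++ S' := by
        have : (T ++ S') ++ T = T ++ (T ++ S') := hcomm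
        simp only [List.append_assoc] at this
        exact List.append_cancel_left this
      have hlen' : S'.length + T.length ≤ n := by
        have h1 : 1 ≤ T.length := List.length_pos_iff.mpr hT
        simp at hn; omega
      obtain ⟨w, m, k, hm, hk, hSw, hTw⟩ := ih S' T hlen' hS' hT hcomm'
      exact ⟨w, k + m, k, by omega, hk, by rw [wpow_add, hSw, hTw], hTw⟩

theorem stmt13 {α : Type*} [LinearOrder α] [Inhabited α] (A B S T : List α) (p : ℕ)
    (hA : Primitive A) (hB : Primitive B) (hlen : A.length ≤ B.length)
    (hRne : R A ≠ R B)
    (hdeg : (wpow A p) <+: B ∧ ¬ (wpow A (p + 1)) <+: B)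
    (hBdecomp : B = wpow A p ++ S)
    (hS : S ≠ []) (hT : T ≠ []) (hAdecomp : A = S ++ T) :
    S ++ T ≠ T ++ S := by
  intro hc
  obtain ⟨w, m, k, hm, hk, hSw, hTw⟩ :=
    comm_pow (S.length + T.length) S T le_rfl hS hT hc
  exact hA.2 w (m + k) (by omega) (by rw [hAdecomp, hSw, hTw, wpow_add])
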